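/- arXiv:1904.11285 — 2 statements merged into one kernel-verified Lean document; each statement's English description precedes it below -/
import Mathlib

section
/- Let P be a connected graph on k vertices with maximum degree bounded by a constant d. Then the number of pairwise non-isomorphic separations of P of order at most √k is at most 2^{O(√k · log k)}, where two separations (X,Y), (X',Y') are isomorphic if X ∩ Y = X' ∩ Y' and some automorphism of P fixing X ∩ Y pointwise maps X to X'. -/
open SimpleGraph Set

private lemma side_step {V : Type*} {P : SimpleGraph V} {X Y : Set V}
    (hU : X ∪ Y = Set.univ) (hE : ∀ a ∈ X \ Y, ∀ b ∈ Y \ X, ¬ P.Adj a b)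
    {a b : V} (hab : P.Adj a b) (ha : a ∉ X ∩ Y) (hb : b ∉ X ∩ Y)
    (haX : a ∈ X) : b ∈ X := by
  by_contra hbX
  have hbY : b ∈ Y := by
    have : b ∈ X ∪ Y := hU ▸ Set.mem_univ b
    exact ((Set.mem_union _ _ _).1 this).resolve_left hbX
  exact hE a ⟨haX, fun hY => ha ⟨haX, hY⟩⟩ b ⟨hbY, hbX⟩ hab

private lemma side_const {V : Type*} {P : SimpleGraph V} {X Y : Set V}
    (hU : X ∪ Y = Set.univ) (hE : ∀ a ∈ X \ Y, ∀ b ∈ Y \ X, ¬ P.Adj a b) :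
    ∀ {u v : V} (w : P.Walk u v), (∀ x ∈ w.support, x ∉ X ∩ Y) → (u ∈ X ↔ v ∈ X) := by
  intro u v w
  induction w with
  | nil => intro _; exact Iff.rfl
  | @cons a b c h p ih =>
    intro hs
    have ha : a ∉ X ∩ Y := hs a (by simp)
    have hb : b ∉ X ∩ Y := hs b (by simp)
    have hrest : ∀ x ∈ p.support, x ∉ X ∩ Y := fun x hx =>
      hs x (by simp [SimpleGraph.Walk.support_cons, hx])
    have step : a ∈ X ↔ b ∈ X :=
      ⟨side_step hU hE h ha hb, side_step hU hE h.symm hb ha⟩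
    exact step.trans (ih hrest)

private lemma exists_boundary {V : Type*} {P : SimpleGraph V} {S : Set V} :
    ∀ {v t : V} (_ : P.Walk v t), v ∉ S → t ∈ S →
      ∃ b, b ∉ S ∧ (∃ w' : P.Walk v b, ∀ x ∈ w'.support, x ∉ S) ∧ ∃ s ∈ S, P.Adj b s := by
  intro v t w
  induction w with
  | nil => intro hv ht; exact absurd ht hv
  | @cons a u c h p ih =>
    intro hv ht
    by_cases hu : u ∈ S
    · exact ⟨a, hv, ⟨SimpleGraph.Walk.nil, by simp [hv]⟩, u, hu, h⟩
    · obtain ⟨b, hb, ⟨w', hw'⟩, s, hs, hadj⟩ := ih hu ht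
      refine ⟨b, hb, ⟨SimpleGraph.Walk.cons h w', ?_⟩, s, hs, hadj⟩
      intro x hx
      rw [SimpleGraph.Walk.support_cons, List.mem_cons] at hx
      rcases hx with rfl | hx
      · exact hv
      · exact hw' x hx

private lemma X_sub {k : ℕ} {P : SimpleGraph (Fin k)} (hconn : P.Connected)
    {X Y X' Y' : Set (Fin k)} {v0 : Fin k}
    (hU : X ∪ Y = Set.univ)
    (hE : ∀ a ∈ X \ Y, ∀ b ∈ Y \ X, ¬ P.Adj a b)
    (hU' : X' ∪ Y' = Set.univ)
    (hE' : ∀ a ∈ X' \ Y', ∀ b ∈ Y' \ X', ¬ P.Adj a b)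
    (hS : X ∩ Y = X' ∩ Y')
    (hW : X ∩ ({b | b ∉ X ∩ Y ∧ ∃ s ∈ X ∩ Y, P.Adj b s} ∪ {v0})
        = X' ∩ ({b | b ∉ X ∩ Y ∧ ∃ s ∈ X ∩ Y, P.Adj b s} ∪ {v0})) :
    X ⊆ X' := by
  intro v hv
  by_cases hvS : v ∈ X ∩ Y
  · exact (hS ▸ hvS).1
  · by_cases hSe : X ∩ Y = ∅
    · -- S empty : use v0
      obtain ⟨w⟩ := hconn.preconnected v v0
      have hsup : ∀ x ∈ w.support, x ∉ X ∩ Y := by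
        intro x _; rw [hSe]; exact Set.notMem_empty x
      have hsup' : ∀ x ∈ w.support, x ∉ X' ∩ Y' := by
        intro x _; rw [← hS, hSe]; exact Set.notMem_empty x
      have h1 : v0 ∈ X := (side_const hU hE w hsup).1 hv
      have h2 : v0 ∈ X' := by
        have : v0 ∈ X ∩ ({b | b ∉ X ∩ Y ∧ ∃ s ∈ X ∩ Y, P.Adj b s} ∪ {v0}) :=
          ⟨h1, Or.inr rfl⟩
        exact (hW ▸ this).1
      exact (side_const hU' hE' w hsup').2 h2
    · -- S nonempty : use a boundary vertex
      obtain ⟨t, ht⟩ := Set.nonempty_iff_ne_empty.2 hSe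
      obtain ⟨w⟩ := hconn.preconnected v t
      obtain ⟨b, hb, ⟨w', hw'⟩, s, hs, hadj⟩ := exists_boundary w hvS ht
      have hbW : b ∈ {b | b ∉ X ∩ Y ∧ ∃ s ∈ X ∩ Y, P.Adj b s} ∪ {v0} :=
        Or.inl ⟨hb, s, hs, hadj⟩
      have h1 : b ∈ X := (side_const hU hE w' hw').1 hv
      have h2 : b ∈ X' := by
        have hmem : b ∈ X ∩ ({b | b ∉ X ∩ Y ∧ ∃ s ∈ X ∩ Y, P.Adj b s} ∪ {v0}) := ⟨h1, hbW⟩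
        rw [hW] at hmem
        exact hmem.1
      have hw'' : ∀ x ∈ w'.support, x ∉ X' ∩ Y' := by
        intro x hx; rw [← hS]; exact hw' x hx
      exact (side_const hU' hE' w' hw'').2 h2

set_option maxHeartbeats 1000000 in
/-- **Few non-isomorphic separations of connected bounded-degree patterns.** For every
degree bound `d` there is a constant `C > 0` such that for every connected graph `P` on
`k ≥ 2` vertices with all degrees at most `d`, any family of pairwise non-isomorphic
separations of `P` of order at most `√k` has size at most `2^(C·√k·log k)`. Two separations
`(X,Y)`, `(X',Y')` are isomorphic if `X ∩ Y = X' ∩ Y'` and some automorphism of `P` fixing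
`X ∩ Y` pointwise maps `X` onto `X'`. -/
theorem count_nonisomorphic_separations (d : ℕ) :
    ∃ C : ℝ, 0 < C ∧ ∀ k : ℕ, 2 ≤ k → ∀ P : SimpleGraph (Fin k), P.Connected →
      (∀ v : Fin k, (P.neighborSet v).ncard ≤ d) →
      ∀ 𝒮 : Set (Set (Fin k) × Set (Fin k)),
        (∀ XY ∈ 𝒮, XY.1 ∪ XY.2 = Set.univ ∧
            (∀ a ∈ XY.1 \ XY.2, ∀ b ∈ XY.2 \ XY.1, ¬ P.Adj a b) ∧
            ((XY.1 ∩ XY.2).ncard : ℝ) ≤ Real.sqrt k) →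
        (∀ XY ∈ 𝒮, ∀ XY' ∈ 𝒮, XY ≠ XY' →
            ¬ (XY.1 ∩ XY.2 = XY'.1 ∩ XY'.2 ∧
                ∃ α : P ≃g P, (∀ v ∈ XY.1 ∩ XY.2, α v = v) ∧ α '' XY.1 = XY'.1)) →
        (𝒮.ncard : ℝ) ≤ (2 : ℝ) ^ (C * Real.sqrt k * Real.log k) := by
  classical
  refine ⟨((d : ℝ) + 3) / Real.log 2,
    div_pos (by positivity) (Real.log_pos one_lt_two), ?_⟩
  intro k hk P hconn hdeg 𝒮 hsep _hiso
  set m := Nat.sqrt k with hm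
  have hk0 : 0 < k := by omega
  let v0 : Fin k := ⟨0, hk0⟩
  let W : Set (Fin k) → Set (Fin k) :=
    fun S => {b | b ∉ S ∧ ∃ s ∈ S, P.Adj b s} ∪ {v0}
  let F : Set (Fin k) → Finset (Fin k) := fun s => (Set.toFinite s).toFinset
  have hFcard : ∀ s : Set (Fin k), (F s).card = s.ncard :=
    fun s => (Set.ncard_eq_toFinset_card s (Set.toFinite s)).symm
  have hFinj : ∀ s t : Set (Fin k), F s = F t → s = t := by
    intro s t h
    have := congrArg (fun u : Finset (Fin k) => (↑u : Set (Fin k))) h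
    simpa only [F, Set.Finite.coe_toFinset] using this
  let g : Set (Fin k) × Set (Fin k) → Finset (Fin k) × Finset (Fin k) :=
    fun XY => (F (XY.1 ∩ XY.2), F (XY.1 ∩ W (XY.1 ∩ XY.2)))
  -- injectivity of `g` on `𝒮`
  have hinj : Set.InjOn g 𝒮 := by
    intro XY h1 XY' h2 heq
    obtain ⟨hU, hE, -⟩ := hsep XY h1
    obtain ⟨hU', hE', -⟩ := hsep XY' h2
    have hS : XY.1 ∩ XY.2 = XY'.1 ∩ XY'.2 := hFinj _ _ (congrArg Prod.fst heq)
    have hWeq : XY.1 ∩ W (XY.1 ∩ XY.2) = XY'.1 ∩ W (XY.1 ∩ XY.2) := by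
      have h3 := hFinj _ _ (congrArg Prod.snd heq)
      rw [← hS] at h3
      exact h3
    have hWeq' : XY'.1 ∩ W (XY'.1 ∩ XY'.2) = XY.1 ∩ W (XY'.1 ∩ XY'.2) := by
      rw [← hS]
      exact hWeq.symm
    have hX : XY.1 = XY'.1 :=
      subset_antisymm (X_sub hconn hU hE hU' hE' hS hWeq)
        (X_sub hconn hU' hE' hU hE hS.symm hWeq')
    have hY : XY.2 = XY'.2 := by
      have e : ∀ A B : Set (Fin k), A ∪ B = Set.univ → B = (A ∩ B) ∪ Aᶜ := by
        intro A B hAB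
        ext v
        have hv : v ∈ A ∪ B := hAB ▸ Set.mem_univ v
        simp only [Set.mem_union, Set.mem_inter_iff, Set.mem_compl_iff]
        rcases (Set.mem_union _ _ _).1 hv with h | h <;> constructor <;> tauto
      rw [e _ _ hU, e _ _ hU', hS, hX]
    exact Prod.ext hX hY
  -- order bound in ℕ
  have hmem : ∀ XY ∈ 𝒮, (XY.1 ∩ XY.2).ncard ≤ m := by
    intro XY h
    have h3 := (hsep XY h).2.2
    have h4 : ((XY.1 ∩ XY.2).ncard : ℝ) * ((XY.1 ∩ XY.2).ncard : ℝ) ≤ (k : ℝ) := by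
      nlinarith [Real.sqrt_nonneg (k : ℝ),
        Real.mul_self_sqrt (show (0:ℝ) ≤ (k:ℝ) by positivity)]
    have h5 : (XY.1 ∩ XY.2).ncard * (XY.1 ∩ XY.2).ncard ≤ k := by exact_mod_cast h4
    exact Nat.le_sqrt.mpr h5
  let A : Finset (Finset (Fin k)) := Finset.univ.filter (fun s => s.card ≤ m)
  let T : Finset (Finset (Fin k) × Finset (Fin k)) :=
    A.biUnion (fun s => {s} ×ˢ (F (W ↑s)).powerset)
  have hsub : g '' 𝒮 ⊆ ↑T := by
    rintro _ ⟨XY, hXY, rfl⟩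
    refine Finset.mem_coe.2 (Finset.mem_biUnion.2 ⟨F (XY.1 ∩ XY.2), ?_, ?_⟩)
    · simp only [A, Finset.mem_filter, Finset.mem_univ, true_and]
      rw [hFcard]
      exact hmem XY hXY
    · refine Finset.mem_product.2 ⟨Finset.mem_singleton_self _, Finset.mem_powerset.2 ?_⟩
      have hc : (↑(F (XY.1 ∩ XY.2)) : Set (Fin k)) = XY.1 ∩ XY.2 :=
        Set.Finite.coe_toFinset _
      rw [hc]
      intro x hx
      have hx' : x ∈ XY.1 ∩ W (XY.1 ∩ XY.2) := by
        simpa only [F, g, Set.Finite.mem_toFinset] using hx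
      simp only [F, Set.Finite.mem_toFinset]
      exact hx'.2
  have h1 : 𝒮.ncard = (g '' 𝒮).ncard := (Set.ncard_image_of_injOn hinj).symm
  have h2 : (g '' 𝒮).ncard ≤ T.card := by
    have := Set.ncard_le_ncard hsub T.finite_toSet
    simpa [Set.ncard_coe_finset] using this
  have hWcard : ∀ s ∈ A, (F (W ↑s)).card ≤ d * m + 1 := by
    intro s hsA
    have hsc : s.card ≤ m := by simpa [A] using hsA
    rw [hFcard]
    have hle1 : (W ↑s).ncard ≤
        ({b | b ∉ (↑s : Set (Fin k)) ∧ ∃ x ∈ (↑s : Set (Fin k)), P.Adj b x}).ncard + 1 := by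
      refine le_trans (Set.ncard_union_le _ _) ?_
      rw [Set.ncard_singleton]
    have hbd : ({b | b ∉ (↑s : Set (Fin k)) ∧ ∃ x ∈ (↑s : Set (Fin k)), P.Adj b x}).ncard
        ≤ d * m := by
      set B : Set (Fin k) :=
        {b | b ∉ (↑s : Set (Fin k)) ∧ ∃ x ∈ (↑s : Set (Fin k)), P.Adj b x} with hB
      have hsubB : F B ⊆ s.biUnion (fun x => F (P.neighborSet x)) := by
        intro b hb
        have hbB : b ∈ B := by simpa only [F, Set.Finite.mem_toFinset] using hb
        obtain ⟨-, x, hx, hadj⟩ := hbB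
        refine Finset.mem_biUnion.2 ⟨x, Finset.mem_coe.1 hx, ?_⟩
        simp only [F, Set.Finite.mem_toFinset, SimpleGraph.mem_neighborSet]
        exact hadj.symm
      calc B.ncard = (F B).card := (hFcard B).symm
        _ ≤ (s.biUnion (fun x => F (P.neighborSet x))).card := Finset.card_le_card hsubB
        _ ≤ ∑ x ∈ s, (F (P.neighborSet x)).card := Finset.card_biUnion_le
        _ ≤ ∑ x ∈ s, d := Finset.sum_le_sum (fun x _ => by rw [hFcard]; exact hdeg x)
        _ = s.card * d := by rw [Finset.sum_const, smul_eq_mul]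
        _ ≤ m * d := Nat.mul_le_mul_right d hsc
        _ = d * m := Nat.mul_comm m d
    omega
  have hT : T.card ≤ A.card * 2 ^ (d * m + 1) := by
    calc T.card ≤ ∑ s ∈ A, ({s} ×ˢ (F (W ↑s)).powerset).card := Finset.card_biUnion_le
      _ ≤ ∑ _s ∈ A, 2 ^ (d * m + 1) := Finset.sum_le_sum (fun s hs => by
            rw [Finset.card_product, Finset.card_singleton, one_mul, Finset.card_powerset]
            exact Nat.pow_le_pow_right (by norm_num) (hWcard s hs))
      _ = A.card * 2 ^ (d * m + 1) := by rw [Finset.sum_const, smul_eq_mul]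
  have hA : A.card ≤ (m + 1) * k ^ m := by
    have hsubA : A ⊆ (Finset.range (m + 1)).biUnion
        (fun i => Finset.powersetCard i (Finset.univ : Finset (Fin k))) := by
      intro s hs
      have hsc : s.card ≤ m := by simpa [A] using hs
      exact Finset.mem_biUnion.2 ⟨s.card, Finset.mem_range.2 (Nat.lt_succ_of_le hsc),
        Finset.mem_powersetCard.2 ⟨Finset.subset_univ s, rfl⟩⟩
    calc A.card ≤ _ := Finset.card_le_card hsubA
      _ ≤ ∑ i ∈ Finset.range (m + 1),
            (Finset.powersetCard i (Finset.univ : Finset (Fin k))).card :=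
          Finset.card_biUnion_le
      _ ≤ ∑ _i ∈ Finset.range (m + 1), k ^ m := Finset.sum_le_sum (fun i hi => by
            rw [Finset.card_powersetCard, Finset.card_univ, Fintype.card_fin]
            exact le_trans (Nat.choose_le_pow k i)
              (Nat.pow_le_pow_right hk0 (Nat.lt_succ_iff.1 (Finset.mem_range.1 hi))))
      _ = (m + 1) * k ^ m := by rw [Finset.sum_const, Finset.card_range, smul_eq_mul]
  have hN : 𝒮.ncard ≤ (m + 1) * k ^ m * 2 ^ (d * m + 1) := by
    calc 𝒮.ncard = (g '' 𝒮).ncard := h1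
      _ ≤ T.card := h2
      _ ≤ A.card * 2 ^ (d * m + 1) := hT
      _ ≤ (m + 1) * k ^ m * 2 ^ (d * m + 1) := Nat.mul_le_mul_right _ hA
  -- real estimates
  have hm_le : (m : ℝ) ≤ Real.sqrt k := by
    rw [Real.le_sqrt (by positivity) (by positivity)]
    have := Nat.sqrt_le' k
    exact_mod_cast this
  have hs1 : (1 : ℝ) ≤ Real.sqrt k := by
    rw [show (1:ℝ) = Real.sqrt 1 from (Real.sqrt_one).symm]
    exact Real.sqrt_le_sqrt (by exact_mod_cast Nat.one_le_of_lt hk)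
  have hlog2 : (0 : ℝ) < Real.log 2 := Real.log_pos one_lt_two
  have hlogk2 : Real.log 2 ≤ Real.log k :=
    Real.log_le_log (by norm_num) (by exact_mod_cast hk)
  have hlogk : (0 : ℝ) < Real.log k := lt_of_lt_of_le hlog2 hlogk2
  have hm1k : (m : ℝ) + 1 ≤ (k : ℝ) := by
    exact_mod_cast Nat.succ_le_of_lt (Nat.sqrt_lt_self (by omega))
  have hNpos : (0 : ℝ) < (((m + 1) * k ^ m * 2 ^ (d * m + 1) : ℕ) : ℝ) := by
    have : 0 < (m + 1) * k ^ m * 2 ^ (d * m + 1) :=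
      Nat.mul_pos (Nat.mul_pos (Nat.succ_pos m) (Nat.pow_pos hk0))
        (Nat.pow_pos (by norm_num))
    exact_mod_cast this
  have hfinal : (((m + 1) * k ^ m * 2 ^ (d * m + 1) : ℕ) : ℝ) ≤
      (2 : ℝ) ^ (((d : ℝ) + 3) / Real.log 2 * Real.sqrt k * Real.log k) := by
    rw [Real.le_rpow_iff_log_le hNpos (by norm_num)]
    have hcast : (((m + 1) * k ^ m * 2 ^ (d * m + 1) : ℕ) : ℝ) =
        ((m : ℝ) + 1) * (k : ℝ) ^ m * (2 : ℝ) ^ (d * m + 1) := by push_cast; ring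
    have hNle : ((m : ℝ) + 1) * (k : ℝ) ^ m * (2 : ℝ) ^ (d * m + 1) ≤
        (k : ℝ) ^ (m + 1) * (2 : ℝ) ^ (d * m + 1) := by
      have h6 : ((m : ℝ) + 1) * (k : ℝ) ^ m ≤ (k : ℝ) ^ (m + 1) := by
        calc ((m : ℝ) + 1) * (k : ℝ) ^ m ≤ (k : ℝ) * (k : ℝ) ^ m :=
              mul_le_mul_of_nonneg_right hm1k (by positivity)
          _ = (k : ℝ) ^ (m + 1) := by ring
      exact mul_le_mul_of_nonneg_right h6 (by positivity)
    have h7 : Real.log (((m + 1) * k ^ m * 2 ^ (d * m + 1) : ℕ) : ℝ) ≤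
        Real.log ((k : ℝ) ^ (m + 1) * (2 : ℝ) ^ (d * m + 1)) := by
      apply Real.log_le_log hNpos
      rw [hcast]
      exact hNle
    rw [Real.log_mul (by positivity) (by positivity), Real.log_pow, Real.log_pow] at h7
    have hE : ((d : ℝ) + 3) / Real.log 2 * Real.sqrt k * Real.log k * Real.log 2 =
        ((d : ℝ) + 3) * Real.sqrt k * Real.log k := by
      field_simp
    rw [hE]
    have e1 : ((m : ℝ) + 1) * Real.log k ≤ 2 * Real.sqrt k * Real.log k := by
      nlinarith [hm_le, hs1, hlogk.le]
    have e2 : ((d : ℝ) * m + 1) * Real.log 2 ≤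
        ((d : ℝ) + 1) * Real.sqrt k * Real.log k := by
      have hd0 : (0 : ℝ) ≤ (d : ℝ) := Nat.cast_nonneg d
      have h8 : (d : ℝ) * m + 1 ≤ ((d : ℝ) + 1) * Real.sqrt k := by
        nlinarith [mul_le_mul_of_nonneg_left hm_le hd0, hs1]
      calc ((d : ℝ) * m + 1) * Real.log 2
          ≤ ((d : ℝ) + 1) * Real.sqrt k * Real.log 2 :=
            mul_le_mul_of_nonneg_right h8 hlog2.le
        _ ≤ ((d : ℝ) + 1) * Real.sqrt k * Real.log k := by
            apply mul_le_mul_of_nonneg_left hlogk2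
            positivity
    push_cast at h7 ⊢
    linarith [h7, e1, e2]
  calc (𝒮.ncard : ℝ) ≤ (((m + 1) * k ^ m * 2 ^ (d * m + 1) : ℕ) : ℝ) := Nat.cast_le.2 hN
    _ ≤ _ := hfinal
end

section
/- Let T(ν, u) for ν, u ∈ ℕ satisfy T(ν, u) = 1 when ν ≤ b or u ≤ b (base case with threshold b = √k·polylog(k)), and otherwise T(ν, u) ≤ 2·T(⌈3ν/4⌉, u) + Q·T(ν, u − s) where Q = k^{c log k} and s = ⌊c'√k⌋ ≥ 1. Then T(ν, u) ≤ ν^4 · exp(c₂ · (u/√k) · log² k) for sufficiently large constant c₂ (depending on c, c') and k ≥ 2. -/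
/-- **Recursion bound for the divide-and-conquer subproblem count.** Suppose
`T(ν, u) = 1` whenever `ν ≤ b` or `u ≤ b`, where the base-case threshold `b` is at least
`√k · polylog(k)` (here `√k · log²k ≤ b` and `b ≥ 13`), and otherwise
`T(ν, u) ≤ 2·T(⌈3ν/4⌉, u) + Q·T(ν, u − s)` with `Q = k^{c·log k}` and
`s = ⌊c'·√k⌋ ≥ 1`. Then, for a sufficiently large constant `c₂` (depending only on
`c, c'`) and all `k ≥ 2`, `T(ν, u) ≤ ν⁴ · exp(c₂ · (u/√k) · log²k)` for all `ν ≥ 1`. -/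
theorem recursion_bound (c c' : ℝ) (hc : 0 < c) (hc' : 0 < c') :
    ∃ c₂ : ℝ, 0 < c₂ ∧ ∀ k : ℕ, 2 ≤ k →
      ∀ b s : ℕ,
        Real.sqrt k * (Real.log k) ^ 2 ≤ (b : ℝ) → 13 ≤ b →
        s = Nat.floor (c' * Real.sqrt k) → 1 ≤ s →
      ∀ Q : ℝ, Q = (k : ℝ) ^ (c * Real.log k) →
      ∀ T : ℕ → ℕ → ℝ,
        (∀ ν u : ℕ, (ν ≤ b ∨ u ≤ b) → T ν u = 1) →
        (∀ ν u : ℕ, b < ν → b < u →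
          T ν u ≤ 2 * T ((3 * ν + 3) / 4) u + Q * T ν (u - s)) →
        ∀ ν u : ℕ, 1 ≤ ν →
          T ν u ≤ (ν : ℝ) ^ 4 *
            Real.exp (c₂ * ((u : ℝ) / Real.sqrt k) * (Real.log k) ^ 2) := by
  have hlog2 : (0:ℝ) < Real.log 2 := Real.log_pos (by norm_num)
  set m : ℝ := min (c'/2) ((Real.log 2)^2) with hmdef
  have hm : 0 < m := lt_min (by linarith) (by positivity)
  refine ⟨(c + 3/(Real.log 2)^2 + 1) / m, by positivity, ?_⟩
  set c₂ : ℝ := (c + 3/(Real.log 2)^2 + 1) / m with hc₂def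
  have hc₂ : 0 < c₂ := by positivity
  intro k hk b s hb hb13 hsdef hs1 Q hQ T hbase hrec
  have hk0 : (0:ℝ) < (k:ℝ) := by positivity
  have hk2 : (2:ℝ) ≤ (k:ℝ) := by exact_mod_cast hk
  have hsk : 0 < Real.sqrt k := Real.sqrt_pos.mpr hk0
  have hlogk : Real.log 2 ≤ Real.log k := Real.log_le_log (by norm_num) hk2
  set L : ℝ := (Real.log k)^2 with hL
  have hL2 : (Real.log 2)^2 ≤ L := pow_le_pow_left₀ hlog2.le hlogk 2
  have hLpos : 0 < L := lt_of_lt_of_le (by positivity) hL2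
  have hc₂m : c₂ * m = c + 3/(Real.log 2)^2 + 1 := by
    rw [hc₂def]; field_simp
  -- lower bound on s
  have hs_lb : c' * Real.sqrt k / 2 ≤ (s:ℝ) := by
    have h1 : c' * Real.sqrt k < (s:ℝ) + 1 := by
      rw [hsdef]; push_cast; exact Nat.lt_floor_add_one _
    have h2 : (1:ℝ) ≤ (s:ℝ) := by exact_mod_cast hs1
    rcases le_or_gt (c' * Real.sqrt k) 2 with h | h
    · linarith
    · linarith
  -- Q as an exponential
  have hQ' : Q = Real.exp (c * L) := by
    rw [hQ, Real.rpow_def_of_pos hk0, hL]; congr 1; ring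
  have hQpos : 0 < Q := by rw [hQ']; exact Real.exp_pos _
  -- exp 3 ≥ 8
  have hexp3 : (8:ℝ) ≤ Real.exp 3 := by
    have h1 : (2:ℝ) ≤ Real.exp 1 := by linarith [Real.add_one_le_exp (1:ℝ)]
    calc (8:ℝ) = 2^(3:ℕ) := by norm_num
      _ ≤ (Real.exp 1)^(3:ℕ) := pow_le_pow_left₀ (by norm_num) h1 3
      _ = Real.exp 3 := by
          rw [← Real.exp_nat_mul]; norm_num
  -- key: Q ≤ (4207/32768) * exp (c₂ * m * L)
  have hQkey : Q ≤ 4207/32768 * Real.exp (c₂ * m * L) := by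
    have hsplit : c₂ * m * L = c * L + (3/(Real.log 2)^2 + 1) * L := by
      rw [hc₂m]; ring
    have h3 : (3:ℝ) ≤ (3/(Real.log 2)^2 + 1) * L := by
      have h4 : 3/(Real.log 2)^2 * (Real.log 2)^2 ≤ 3/(Real.log 2)^2 * L := by
        apply mul_le_mul_of_nonneg_left hL2 (by positivity)
      have h5 : 3/(Real.log 2)^2 * (Real.log 2)^2 = 3 := by field_simp
      nlinarith
    have h6 : Real.exp 3 ≤ Real.exp ((3/(Real.log 2)^2 + 1) * L) := Real.exp_le_exp.mpr h3
    rw [hQ', hsplit, Real.exp_add]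
    have hE : 0 < Real.exp (c * L) := Real.exp_pos _
    have h10 : Real.exp (c*L) * 8 ≤
        Real.exp (c*L) * Real.exp ((3/(Real.log 2)^2 + 1) * L) :=
      mul_le_mul_of_nonneg_left (le_trans hexp3 h6) hE.le
    linarith
  -- the main induction
  have main : ∀ n ν u : ℕ, ν + u < n → 1 ≤ ν →
      T ν u ≤ (ν:ℝ)^4 * Real.exp (c₂ * ((u:ℝ)/Real.sqrt k) * L) := by
    intro n
    induction n using Nat.strong_induction_on with
    | _ n ih =>
      intro ν u hn hν
      have hν1 : (1:ℝ) ≤ (ν:ℝ) := by exact_mod_cast hν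
      have hE1 : 1 ≤ Real.exp (c₂ * ((u:ℝ)/Real.sqrt k) * L) :=
        Real.one_le_exp (by positivity)
      by_cases hbc : ν ≤ b ∨ u ≤ b
      · rw [hbase ν u hbc]
        have h4 : (1:ℝ) ≤ (ν:ℝ)^4 := by
          calc (1:ℝ) = 1^4 := by norm_num
            _ ≤ (ν:ℝ)^4 := pow_le_pow_left₀ (by norm_num) hν1 4
        calc (1:ℝ) ≤ (ν:ℝ)^4 := h4
          _ ≤ (ν:ℝ)^4 * Real.exp (c₂ * ((u:ℝ)/Real.sqrt k) * L) :=
              le_mul_of_one_le_right (by positivity) hE1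
      · push_neg at hbc
        obtain ⟨hνb, hub⟩ := hbc
        have hν14 : 14 ≤ ν := by omega
        have hu14 : 14 ≤ u := by omega
        set ν' := (3*ν+3)/4 with hν'
        have hν'lt : ν' < ν := by omega
        have hν'1 : 1 ≤ ν' := by omega
        have h1 : T ν u ≤ 2 * T ν' u + Q * T ν (u - s) := hrec ν u hνb hub
        have ih1 : T ν' u ≤ (ν':ℝ)^4 * Real.exp (c₂ * ((u:ℝ)/Real.sqrt k) * L) :=
          ih (ν + u) hn ν' u (by omega) hν'1
        have ih2 : T ν (u-s) ≤ (ν:ℝ)^4 * Real.exp (c₂ * ((↑(u-s):ℝ)/Real.sqrt k) * L) :=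
          ih (ν + u) hn ν (u-s) (by omega) hν
        -- size bound
        have hcast : ((ν':ℕ):ℝ) ≤ 13/16 * (ν:ℝ) := by
          have h3 : 16 * ν' ≤ 13 * ν := by omega
          have h3' : 16 * ((ν':ℕ):ℝ) ≤ 13 * (ν:ℝ) := by exact_mod_cast h3
          linarith
        have hp : ((ν':ℕ):ℝ)^4 ≤ 28561/65536 * (ν:ℝ)^4 := by
          have h := pow_le_pow_left₀ (by positivity : (0:ℝ) ≤ ((ν':ℕ):ℝ)) hcast 4
          have he : (13/16 * (ν:ℝ))^4 = 28561/65536 * (ν:ℝ)^4 := by ring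
          linarith [he.le, he.ge]
        -- exponential gap
        set d := min u s with hd
        have hdu : (u - s) + d = u := by omega
        have hcu : ((u-s:ℕ):ℝ) + (d:ℝ) = (u:ℝ) := by exact_mod_cast hdu
        have hmin : m * Real.sqrt k ≤ (d:ℝ) := by
          rcases le_total s u with h | h
          · have : d = s := by omega
            rw [this]
            have h7 : m ≤ c'/2 := min_le_left _ _
            calc m * Real.sqrt k ≤ c'/2 * Real.sqrt k :=
                  mul_le_mul_of_nonneg_right h7 hsk.le
              _ = c' * Real.sqrt k / 2 := by ring
              _ ≤ (s:ℝ) := hs_lb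
          · have : d = u := by omega
            rw [this]
            have h7 : m ≤ (Real.log 2)^2 := min_le_right _ _
            have hbu : (b:ℝ) ≤ (u:ℝ) := by exact_mod_cast hub.le
            have h8 : Real.sqrt k * (Real.log 2)^2 ≤ Real.sqrt k * L :=
              mul_le_mul_of_nonneg_left hL2 hsk.le
            calc m * Real.sqrt k ≤ (Real.log 2)^2 * Real.sqrt k :=
                  mul_le_mul_of_nonneg_right h7 hsk.le
              _ = Real.sqrt k * (Real.log 2)^2 := by ring
              _ ≤ Real.sqrt k * L := h8
              _ ≤ (b:ℝ) := hb
              _ ≤ (u:ℝ) := hbu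
        have hkey : c₂ * ((u:ℝ)/Real.sqrt k) * L
            = c₂ * ((↑(u-s):ℝ)/Real.sqrt k) * L + c₂ * ((d:ℝ)/Real.sqrt k) * L := by
          rw [← hcu]; ring
        have hdexp : c₂ * m * L ≤ c₂ * ((d:ℝ)/Real.sqrt k) * L := by
          have h9 : m ≤ (d:ℝ)/Real.sqrt k := (le_div_iff₀ hsk).mpr hmin
          have := mul_le_mul_of_nonneg_right
            (mul_le_mul_of_nonneg_left h9 hc₂.le) hLpos.le
          linarith
        have hQd : Q ≤ 4207/32768 * Real.exp (c₂ * ((d:ℝ)/Real.sqrt k) * L) := by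
          calc Q ≤ 4207/32768 * Real.exp (c₂ * m * L) := hQkey
            _ ≤ 4207/32768 * Real.exp (c₂ * ((d:ℝ)/Real.sqrt k) * L) := by
                have := Real.exp_le_exp.mpr hdexp
                linarith
        set Eus := Real.exp (c₂ * ((↑(u-s):ℝ)/Real.sqrt k) * L) with hEus
        have hEuspos : 0 < Eus := Real.exp_pos _
        have hEu : Real.exp (c₂ * ((u:ℝ)/Real.sqrt k) * L)
            = Eus * Real.exp (c₂ * ((d:ℝ)/Real.sqrt k) * L) := by
          rw [hkey, Real.exp_add]
        have hQE : Q * Eus ≤ 4207/32768 * Real.exp (c₂ * ((u:ℝ)/Real.sqrt k) * L) := by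
          rw [hEu]
          calc Q * Eus ≤ 4207/32768 * Real.exp (c₂ * ((d:ℝ)/Real.sqrt k) * L) * Eus :=
                mul_le_mul_of_nonneg_right hQd hEuspos.le
            _ = 4207/32768 * (Eus * Real.exp (c₂ * ((d:ℝ)/Real.sqrt k) * L)) := by ring
        -- combine
        set Eu := Real.exp (c₂ * ((u:ℝ)/Real.sqrt k) * L) with hEu'
        have hEupos : 0 < Eu := Real.exp_pos _
        have t1 : 2 * T ν' u ≤ 28561/32768 * (ν:ℝ)^4 * Eu := by
          have h11 := mul_le_mul_of_nonneg_right hp hEupos.le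
          linarith
        have t2 : Q * T ν (u-s) ≤ 4207/32768 * (ν:ℝ)^4 * Eu := by
          have h12 := mul_le_mul_of_nonneg_left ih2 hQpos.le
          have h13 := mul_le_mul_of_nonneg_left hQE
            (by positivity : (0:ℝ) ≤ (ν:ℝ)^4)
          calc Q * T ν (u-s) ≤ Q * ((ν:ℝ)^4 * Eus) := h12
            _ = (ν:ℝ)^4 * (Q * Eus) := by ring
            _ ≤ (ν:ℝ)^4 * (4207/32768 * Eu) := h13
            _ = 4207/32768 * (ν:ℝ)^4 * Eu := by ring
        calc T ν u ≤ 2 * T ν' u + Q * T ν (u-s) := h1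
          _ ≤ 28561/32768 * (ν:ℝ)^4 * Eu + 4207/32768 * (ν:ℝ)^4 * Eu := by linarith
          _ = (ν:ℝ)^4 * Eu := by ring
  intro ν u hν
  exact main (ν + u + 1) ν u (by omega) hν
end
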